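/- arXiv:0903.4614 — 2 statements merged into one kernel-verified Lean document; each statement's English description precedes it below -/
import Mathlib

section
/- Let p/q be a positive irreducible fraction with p even and p, q > 0, and let p/q = [a_0, a_1, ..., a_n] be its standard continued fraction expansion. Define the mother M(p/q) = [a_0, a_1, ..., a_{n-1}, a_n - 2]. Then M(p/q) is a non-negative rational number whose irreducible representation r/s has r even, and d(p/q, M(p/q)) = 2. -/
/-- Evaluate the continued fraction `[a_0, …, a_{n-1}, x]` projectively:
the pair `(u, w)` represents the fraction `u/w` (with `(±1, 0)` representing
`∞`), and `[a, rest] = a + 1/rest` corresponds to `(u,w) ↦ (a*u + w, u)`. -/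
def cfFold (l : List ℤ) (x : ℤ × ℤ) : ℤ × ℤ :=
  l.foldr (fun a y => (a * y.1 + y.2, y.1)) x

/-- The coprime pair `(numerator, denominator)` of the continued fraction
`[a_0, …, a_n]`; the empty continued fraction is `∞ = (1, 0)`. -/
def cfPair (l : List ℤ) : ℤ × ℤ :=
  cfFold l (1, 0)

/-- The rational number represented by a pair. -/
def pairQ (x : ℤ × ℤ) : ℚ :=
  (x.1 : ℚ) / (x.2 : ℚ)

/-- The value of the continued fraction `[a_0, …, a_n]` as a rational number. -/
def cfVal (l : List ℤ) : ℚ :=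
  pairQ (cfPair l)

/-- `l = [a_0, …, a_n]` is a standard continued fraction expansion:
`a_0 ≥ 0`, `a_i ≥ 1` for `1 ≤ i ≤ n`, and `a_n ≥ 2`. -/
def IsStdCF (l : List ℤ) : Prop :=
  l ≠ [] ∧ 0 ≤ l.head! ∧ (∀ b ∈ l.tail, 1 ≤ b) ∧ 2 ≤ l.getLast!


lemma cfFold_cons (a : ℤ) (l : List ℤ) (x : ℤ × ℤ) :
    cfFold (a :: l) x = (a * (cfFold l x).1 + (cfFold l x).2, (cfFold l x).1) := rfl

lemma cfPair_append (l : List ℤ) (x : ℤ) :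
    cfPair (l ++ [x]) = cfFold l (x, 1) := by
  simp [cfPair, cfFold, List.foldr_append]

lemma cfFold_linear (l : List ℤ) (u w : ℤ) :
    cfFold l (u, w) = (u * (cfFold l (1,0)).1 + w * (cfFold l (0,1)).1,
                       u * (cfFold l (1,0)).2 + w * (cfFold l (0,1)).2) := by
  induction l with
  | nil => simp [cfFold]
  | cons a l ih =>
    simp only [cfFold_cons, ih]
    rw [Prod.mk.injEq]
    constructor <;> ring

lemma cfFold_det (l : List ℤ) :
    |(cfFold l (1,0)).1 * (cfFold l (0,1)).2 - (cfFold l (0,1)).1 * (cfFold l (1,0)).2| = 1 := by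
  induction l with
  | nil => simp [cfFold]
  | cons a l ih =>
    simp only [cfFold_cons]
    rw [show (a * (cfFold l (1,0)).1 + (cfFold l (1,0)).2) * (cfFold l (0,1)).1 -
        (a * (cfFold l (0,1)).1 + (cfFold l (0,1)).2) * (cfFold l (1,0)).1 =
        -((cfFold l (1,0)).1 * (cfFold l (0,1)).2 - (cfFold l (0,1)).1 * (cfFold l (1,0)).2) from by
        ring, abs_neg]
    exact ih

lemma cfFold_nonneg (l : List ℤ) (h : ∀ b ∈ l, 0 ≤ b) (x : ℤ × ℤ)
    (h1 : 0 ≤ x.1) (h2 : 0 ≤ x.2) : 0 ≤ (cfFold l x).1 ∧ 0 ≤ (cfFold l x).2 := by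
  induction l with
  | nil => exact ⟨h1, h2⟩
  | cons a l ih =>
    obtain ⟨i1, i2⟩ := ih (fun b hb => h b (List.mem_cons_of_mem a hb))
    refine ⟨?_, i1⟩
    have ha : 0 ≤ a := h a List.mem_cons_self
    simp only [cfFold_cons]
    positivity

/-- (Lemma on the mother `M(p/q)`.)  Let `p/q` be a positive irreducible
fraction with `p` even, with standard continued fraction expansion
`[a_0, …, a_{n-1}, a_n]` (the list `l ++ [a]`).  Then the mother
`M(p/q) = [a_0, …, a_{n-1}, a_n - 2]`, given in lowest terms by
`cfPair (l ++ [a-2]) = (r, s)`, is a non-negative rational number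
(`0 ≤ r`, `0 < s`), its numerator `r` is even, and `d(p/q, M(p/q)) = 2`. -/
theorem mother_nonneg_even_dist_two (p q : ℤ) (hp : 0 < p) (hq : 0 < q)
    (hco : Int.gcd p q = 1) (hev : 2 ∣ p)
    (l : List ℤ) (a : ℤ) (hstd : IsStdCF (l ++ [a]))
    (hval : cfPair (l ++ [a]) = (p, q)) :
    0 ≤ (cfPair (l ++ [a - 2])).1 ∧ 0 < (cfPair (l ++ [a - 2])).2 ∧
    2 ∣ (cfPair (l ++ [a - 2])).1 ∧
    Int.gcd (cfPair (l ++ [a - 2])).1 (cfPair (l ++ [a - 2])).2 = 1 ∧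
    |p * (cfPair (l ++ [a - 2])).2 - (cfPair (l ++ [a - 2])).1 * q| = 2 := by
  obtain ⟨-, hh, ht, hla⟩ := hstd
  have ha : 2 ≤ a := by
    rwa [List.getLast!_of_getLast? List.getLast?_concat] at hla
  have hl0 : ∀ b ∈ l, 0 ≤ b := by
    cases l with
    | nil => simp
    | cons b t =>
      intro x hx
      rcases List.mem_cons.1 hx with rfl | hx
      · simpa using hh
      · have h1 : (1:ℤ) ≤ x := ht x (by simp [hx])
        omega
  set A := (cfFold l (1,0)).1 with hA
  set C := (cfFold l (1,0)).2 with hC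
  set B := (cfFold l (0,1)).1 with hB
  set D := (cfFold l (0,1)).2 with hD
  rw [cfPair_append, cfFold_linear] at hval
  rw [Prod.mk.injEq] at hval
  obtain ⟨hp1, hq1⟩ := hval
  have hnn := cfFold_nonneg l hl0 (a - 2, 1) (by simp; omega) (by norm_num)
  rw [cfFold_linear] at hnn
  have hdet := cfFold_det l
  rw [cfPair_append, cfFold_linear l (a-2) 1]
  rw [← hA, ← hB, ← hC, ← hD]
  set r := (a-2) * A + 1 * B with hrdef
  set s := (a-2) * C + 1 * D with hsdef
  have hnn1 : 0 ≤ r := hnn.1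
  have hnn2 : 0 ≤ s := hnn.2
  have key : p * s - r * q = 2 * (A * D - B * C) := by
    rw [hrdef, hsdef, ← hp1, ← hq1]; ring
  have hqodd : ¬ (2:ℤ) ∣ q := by
    intro h2q
    have hd : (2:ℤ) ∣ (Int.gcd p q : ℤ) := Int.dvd_coe_gcd hev h2q
    rw [hco] at hd
    norm_num at hd
  have hr : r = p - 2 * A := by rw [hrdef, ← hp1]; ring
  have hs : s = q - 2 * C := by rw [hsdef, ← hq1]; ring
  have hrev : 2 ∣ r := by rw [hr]; omega
  have hsodd : ¬ (2:ℤ) ∣ s := by rw [hs]; omega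
  have hspos : 0 < s := by
    rcases hnn2.lt_or_eq with h | h
    · exact h
    · exact absurd (show (2:ℤ) ∣ s by rw [← h]; exact dvd_zero 2) hsodd
  have habs : |p * s - r * q| = 2 := by
    rw [key, abs_mul, show |(2:ℤ)| = 2 from by norm_num, hdet]
    norm_num
  refine ⟨hnn1, hspos, hrev, ?_, habs⟩
  have hgr : (Int.gcd r s : ℤ) ∣ r := Int.gcd_dvd_left r s
  have hgs : (Int.gcd r s : ℤ) ∣ s := Int.gcd_dvd_right r s
  have hg2' : (Int.gcd r s : ℤ) ∣ 2 * (A * D - B * C) := by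
    rw [← key]
    exact dvd_sub (hgs.mul_left p) (hgr.mul_right q)
  have hcases : A * D - B * C = 1 ∨ A * D - B * C = -1 := abs_eq (by norm_num : (0:ℤ) ≤ 1) |>.mp hdet
  have hg2 : (Int.gcd r s : ℤ) ∣ 2 := by
    rcases hcases with h | h <;> rw [h] at hg2'
    · simpa using hg2'
    · simpa using hg2'.neg_right
  have hgnat : Int.gcd r s ∣ 2 := by exact_mod_cast hg2
  have hne2 : Int.gcd r s ≠ 2 := by
    intro h2
    apply hsodd
    have := hgs
    rw [h2] at this
    exact_mod_cast this
  have hne0 : Int.gcd r s ≠ 0 := by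
    intro h0
    rw [Int.gcd_eq_zero_iff] at h0
    exact hspos.ne' h0.2
  have hle : Int.gcd r s ≤ 2 := Nat.le_of_dvd (by norm_num) hgnat
  set g := Int.gcd r s with hg
  clear_value g
  omega
end

section
/- Let p/q be a positive irreducible fraction with p even and standard continued fraction expansion [a_0, ..., a_n]. An irreducible fraction r/s satisfies d(r/s, p/q) = 2 if and only if r/s = [a_0, ..., a_{n-1}, a_n + 2/t] for some odd integer t. The case t = -1 gives the mother M(p/q); for every odd t ≠ -1, p/q is the mother of r/s = [a_0, ..., a_{n-1}, a_n + 2/t]. -/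
/-- `m` is the mother of `x`: if `x = [a_0, …, a_n]` is the standard
continued fraction expansion, then `m = [a_0, …, a_{n-1}, a_n - 2]`. -/
def IsMother (x m : ℚ) : Prop :=
  ∃ (l : List ℤ) (a : ℤ), IsStdCF (l ++ [a]) ∧
    x = cfVal (l ++ [a]) ∧ m = cfVal (l ++ [a - 2])

open Classical in
/-- The mother map `M`, as a function (defaulting to `0` where undefined). -/
noncomputable def motherFun (x : ℚ) : ℚ :=
  if h : ∃ m, IsMother x m then h.choose else 0

/-- The coprime-up-to-sign pair representing the continued fraction
`[a_0, …, a_{n-1}, a_n + 2/t]` with rational last entry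
`a + 2/t = (a*t + 2)/t` (for odd `t` the pair `(a*t + 2, t)` is coprime). -/
def childPair (l : List ℤ) (a t : ℤ) : ℤ × ℤ :=
  cfFold l (a * t + 2, t)

lemma cfFold_append (l m : List ℤ) (x : ℤ × ℤ) :
    cfFold (l ++ m) x = cfFold l (cfFold m x) := List.foldr_append

lemma cfFold_lin (l : List ℤ) (m n : ℤ) (x y : ℤ × ℤ) :
    cfFold l (m*x.1+n*y.1, m*x.2+n*y.2)
      = (m*(cfFold l x).1 + n*(cfFold l y).1, m*(cfFold l x).2 + n*(cfFold l y).2) := by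
  induction l with
  | nil => rfl
  | cons a l ih =>
    simp only [cfFold, List.foldr_cons] at *
    rw [ih]
    exact Prod.ext (by simp; ring) (by simp)

lemma cfFold_neg (l : List ℤ) (x : ℤ × ℤ) :
    cfFold l (-x.1, -x.2) = (-(cfFold l x).1, -(cfFold l x).2) := by
  induction l with
  | nil => rfl
  | cons a l ih =>
    simp only [cfFold, List.foldr_cons] at *
    rw [ih]
    exact Prod.ext (by simp; ring) (by simp)

lemma cfFold_det_s9 (l : List ℤ) (x y : ℤ × ℤ) :
    (cfFold l x).1 * (cfFold l y).2 - (cfFold l x).2 * (cfFold l y).1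
      = (-1)^l.length * (x.1*y.2 - x.2*y.1) := by
  induction l with
  | nil => simp [cfFold]
  | cons a l ih =>
    simp only [cfFold, List.foldr_cons, List.length_cons] at *
    rw [pow_succ]
    nlinarith [ih]

lemma getLast!_append_singleton (l : List ℤ) (a : ℤ) : (l ++ [a]).getLast! = a := by
  induction l with
  | nil => rfl
  | cons b l ih => simp [List.getLast!] at *

lemma mem_app_single (x : ℤ) (m : List ℤ) (b : ℤ) (h1 : ∀ c ∈ m, 1 ≤ c) (hb : 2 ≤ b)
    (hx : x ∈ m ++ [b]) : 1 ≤ x := by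
  simp at hx
  rcases hx with hx | rfl
  · exact h1 x hx
  · omega

lemma std_extend (l : List ℤ) (a : ℤ) (h : IsStdCF (l ++ [a])) (m : List ℤ) (b : ℤ)
    (h1 : ∀ c ∈ m, 1 ≤ c) (hb : 2 ≤ b) : IsStdCF (l ++ (m ++ [b])) := by
  obtain ⟨-, hh, ht, -⟩ := h
  refine ⟨by simp, ?_, ?_, ?_⟩
  · cases l with
    | nil =>
      cases m with
      | nil => simpa using by omega
      | cons c m' => simpa using le_trans (by norm_num) (h1 c (by simp))
    | cons d l' => simpa using by simpa using hh
  · cases l with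
    | nil =>
      intro x hx
      simp only [List.nil_append] at hx
      exact mem_app_single x m b h1 hb (List.mem_of_mem_tail hx)
    | cons d l' =>
      intro x hx
      simp only [List.cons_append, List.tail_cons, List.mem_append] at hx
      rcases hx with hx | hx
      · exact ht x (by simp [hx])
      · exact mem_app_single x m b h1 hb (List.mem_append.mpr hx)
  · rw [← List.append_assoc, getLast!_append_singleton]; exact hb

lemma cfPair_append_singleton (l : List ℤ) (a : ℤ) :
    cfPair (l ++ [a]) = cfFold l (a, 1) := by
  rw [cfPair, cfFold_append]
  congr 1
  simp [cfFold]

lemma odd_of_coprime_even {r s : ℤ} (h : Int.gcd r s = 1) (hr : Even r) : Odd s := by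
  rw [← Int.not_even_iff_odd]
  intro hs
  have h2 : (2:ℤ) ∣ (Int.gcd r s : ℤ) :=
    Int.dvd_coe_gcd (even_iff_two_dvd.mp hr) (even_iff_two_dvd.mp hs)
  rw [h] at h2
  norm_num at h2

lemma pairQ_neg (x : ℤ × ℤ) : pairQ (-x.1, -x.2) = pairQ x := by
  simp [pairQ, neg_div_neg_eq]

/-- Let `p/q` be a positive irreducible fraction with `p` even and standard
continued fraction expansion `l ++ [a]`.  An irreducible fraction `r/s`
satisfies `d(r/s, p/q) = 2` iff `r/s = [a_0, …, a_{n-1}, a_n + 2/t]` for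
some odd integer `t` (equality of fractions stated by cross-multiplication).
The case `t = -1` gives the mother `M(p/q) = [a_0, …, a_{n-1}, a_n - 2]`,
and for every odd `t ≠ -1`, `p/q` is the mother of
`[a_0, …, a_{n-1}, a_n + 2/t]`. -/
theorem dist_two_iff_child_or_mother (p q : ℤ) (hp : 0 < p) (hq : 0 < q)
    (hco : Int.gcd p q = 1) (hev : 2 ∣ p)
    (l : List ℤ) (a : ℤ) (hstd : IsStdCF (l ++ [a]))
    (hval : cfPair (l ++ [a]) = (p, q)) :
    (∀ r s : ℤ, Int.gcd r s = 1 →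
      (|r * q - p * s| = 2 ↔
        ∃ t : ℤ, Odd t ∧ r * (childPair l a t).2 = (childPair l a t).1 * s)) ∧
    (childPair l a (-1)).1 * (cfPair (l ++ [a - 2])).2
      = (cfPair (l ++ [a - 2])).1 * (childPair l a (-1)).2 ∧
    (∀ t : ℤ, Odd t → t ≠ -1 →
      IsMother (pairQ (childPair l a t)) ((p : ℚ) / q)) := by
  have hPa : cfFold l (a, 1) = (p, q) := by rw [← cfPair_append_singleton]; exact hval
  rcases hL : cfPair l with ⟨p', q'⟩
  have hL' : cfFold l (1, 0) = (p', q') := hL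
  -- determinant
  obtain ⟨E, hE, hdet⟩ : ∃ E : ℤ, (E = 1 ∨ E = -1) ∧ p * q' - q * p' = E := by
    refine ⟨-((-1)^l.length), ?_, ?_⟩
    · rcases neg_one_pow_eq_or ℤ l.length with h | h <;> rw [h] <;> norm_num
    · have h := cfFold_det_s9 l (a,1) (1,0)
      rw [hPa, hL'] at h
      simp only [] at h
      linear_combination h
  -- childPair formula
  have hCP : ∀ t : ℤ, childPair l a t = (t*p + 2*p', t*q + 2*q') := by
    intro t
    have h := cfFold_lin l t 2 (a,1) (1,0)
    rw [hPa, hL'] at h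
    simp only [] at h
    rw [childPair, show ((a*t+2 : ℤ), t) = ((t*a+2*1 : ℤ), (t*1+2*0 : ℤ)) from
      Prod.ext (by ring) (by ring), h]
  -- parities
  have hq_odd : Odd q := odd_of_coprime_even hco (even_iff_two_dvd.mpr hev)
  have hE_odd : Odd E := by rcases hE with h | h <;> rw [h] <;> decide
  have hp'_odd : Odd p' := by
    have h1 : Odd (q * p') := by
      have h2 : Even (p * q') := (even_iff_two_dvd.mpr hev).mul_right q'
      have := h2.sub_odd hE_odd
      rwa [show p * q' - E = q * p' from by linear_combination hdet] at this
    exact (Int.odd_mul.mp h1).2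
  refine ⟨?_, ?_, ?_⟩
  · -- part 1
    intro r s hrs
    constructor
    · intro h
      rcases (abs_eq (by norm_num : (0:ℤ) ≤ 2)).mp h with h' | h'
      all_goals {
        have hev_rq : Even (r * q) := by
          have h2 : Even (p * s) := (even_iff_two_dvd.mpr hev).mul_right s
          have h3 : Even (r*q - p*s) := by rw [h']; decide
          have := h3.add h2
          rwa [show r*q - p*s + p*s = r*q from by ring] at this
        have hr_even : Even r :=
          (Int.even_mul.mp hev_rq).resolve_right (Int.not_even_iff_odd.mpr hq_odd)
        have hs_odd : Odd s := odd_of_coprime_even hrs hr_even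
        first
        | (refine ⟨p'*s - r*q', ?_, ?_⟩
           · exact (hp'_odd.mul hs_odd).sub_even (hr_even.mul_right q')
           · rw [hCP]
             simp only []
             linear_combination (p'*s - r*q') * h')
        | (refine ⟨r*q' - p'*s, ?_, ?_⟩
           · exact (hr_even.mul_right q').sub_odd (hp'_odd.mul hs_odd)
           · rw [hCP]
             simp only []
             linear_combination (r*q' - p'*s) * h')
      }
    · rintro ⟨t, ht, heq⟩
      rw [hCP] at heq
      simp only [] at heq
      have hD : (t*p+2*p')*q - (t*q+2*q')*p = -2*E := by linear_combination (-2:ℤ)*hdet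
      have hs2_odd : Odd (t*q + 2*q') := (ht.mul hq_odd).add_even (even_two_mul q')
      have hs2_ne : (t*q + 2*q') ≠ 0 := by
        have := Int.odd_iff.mp hs2_odd; omega
      -- gcd of child pair is 1
      have hg : Int.gcd (t*p+2*p') (t*q+2*q') = 1 := by
        set g : ℕ := Int.gcd (t*p+2*p') (t*q+2*q') with hgdef
        have h1 : (g:ℤ) ∣ (t*p+2*p') := Int.gcd_dvd_left _ _
        have h2 : (g:ℤ) ∣ (t*q+2*q') := Int.gcd_dvd_right _ _
        have h3 : (g:ℤ) ∣ -2*E := hD ▸ dvd_sub (h1.mul_right q) (h2.mul_right p)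
        have h4 : (g:ℤ) ∣ 2 := by
          rcases hE with h | h <;> rw [h] at h3
          · exact (dvd_neg.mp (by simpa using h3))
          · simpa using h3
        have h5 : g ∣ 2 := by exact_mod_cast h4
        rcases (Nat.dvd_prime Nat.prime_two).mp h5 with h6 | h6
        · exact h6
        · exfalso
          rw [h6] at h2
          have h7 := Int.odd_iff.mp hs2_odd
          omega
      have hcop1 : IsCoprime (t*p+2*p') (t*q+2*q') := Int.isCoprime_iff_gcd_eq_one.mpr hg
      have hcoprs : IsCoprime r s := Int.isCoprime_iff_gcd_eq_one.mpr hrs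
      have hss2 : s ∣ (t*q + 2*q') :=
        hcoprs.symm.dvd_of_dvd_mul_left ⟨t*p+2*p', by linear_combination heq⟩
      have hs2s : (t*q + 2*q') ∣ s :=
        hcop1.symm.dvd_of_dvd_mul_left ⟨r, by linear_combination -heq⟩
      have habs : |s| = |t*q + 2*q'| := by
        rw [Int.abs_eq_natAbs, Int.abs_eq_natAbs,
          Nat.dvd_antisymm (Int.natAbs_dvd_natAbs.mpr hss2) (Int.natAbs_dvd_natAbs.mpr hs2s)]
      have key : (r*q - p*s) * (t*q + 2*q') = s * (-2*E) := by
        linear_combination q*heq + s*hD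
      have key2 : |r*q - p*s| * |t*q + 2*q'| = 2 * |t*q + 2*q'| := by
        have h8 : |r*q - p*s| * |t*q + 2*q'| = |s| * |(-2*E)| := by
          rw [← abs_mul, ← abs_mul, key]
        have h9 : |(-2*E)| = 2 := by rcases hE with h | h <;> rw [h] <;> decide
        rw [h9, habs] at h8
        linarith
      exact mul_right_cancel₀ (abs_ne_zero.mpr hs2_ne) key2
  · -- part 2
    have h1 : childPair l a (-1)
        = (-(cfFold l (a-2, 1)).1, -(cfFold l (a-2, 1)).2) := by
      rw [childPair, show ((a*(-1)+2 : ℤ), (-1:ℤ)) = (-((a-2:ℤ)), -(1:ℤ)) from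
        Prod.ext (by ring) (by ring)]
      exact cfFold_neg l (a-2, 1)
    rw [h1, cfPair_append_singleton]
    ring
  · -- part 3
    intro t ht htne
    have ha2 : 2 ≤ a := by
      have := hstd.2.2.2
      rwa [getLast!_append_singleton] at this
    obtain ⟨u, hu⟩ := ht
    subst hu
    have hune : u ≠ -1 := by intro h; rw [h] at htne; norm_num at htne
    rcases (by omega : 1 ≤ u ∨ u = 0 ∨ u = -2 ∨ u ≤ -3) with hc | hc | hc | hc
    · -- t = 2u+1 ≥ 3
      refine ⟨l ++ [a, u], 2, ?_, ?_, ?_⟩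
      · have := std_extend l a hstd [a, u] 2
          (by intro c hc'; simp at hc'; rcases hc' with rfl | rfl <;> omega) (le_refl 2)
        simpa [List.append_assoc] using this
      · have hx : cfPair ((l ++ [a, u]) ++ [2]) = childPair l a (2*u+1) := by
          rw [show (l ++ [a,u]) ++ [2] = l ++ [a,u,2] from by simp, cfPair, cfFold_append,
            childPair]
          congr 1
          simp only [cfFold, List.foldr_cons, List.foldr_nil]
          exact Prod.ext (by ring) (by ring)
        rw [cfVal, hx]
      · have hm : cfPair ((l ++ [a, u]) ++ [2-2]) = (p, q) := by
          rw [show (l ++ [a,u]) ++ [2-2] = l ++ [a,u,0] from by norm_num, cfPair,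
            cfFold_append, show cfFold [a,u,0] (1,0) = ((a:ℤ), (1:ℤ)) from by
              simp only [cfFold, List.foldr_cons, List.foldr_nil]
              exact Prod.ext (by ring) (by ring), hPa]
        rw [cfVal, hm]
        simp [pairQ]
    · -- t = 1
      subst hc
      refine ⟨l, a + 2, ?_, ?_, ?_⟩
      · have := std_extend l a hstd [] (a+2) (by simp) (by omega)
        simpa using this
      · have hx : cfPair (l ++ [a+2]) = childPair l a (2*0+1) := by
          rw [cfPair_append_singleton, childPair]
          congr 1
          exact Prod.ext (by ring) (by ring)
        rw [cfVal, hx]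
      · rw [show a + 2 - 2 = a from by ring, cfVal, hval]
        simp [pairQ]
    · -- t = -3
      subst hc
      refine ⟨l ++ [a-1], 3, ?_, ?_, ?_⟩
      · have := std_extend l a hstd [a-1] 3
          (by intro c hc'; simp at hc'; omega) (by norm_num)
        simpa [List.append_assoc] using this
      · have hx : cfPair ((l ++ [a-1]) ++ [3]) = cfFold l (3*a-2, 3) := by
          rw [show (l ++ [a-1]) ++ [3] = l ++ [a-1,3] from by simp, cfPair, cfFold_append]
          congr 1
          simp only [cfFold, List.foldr_cons, List.foldr_nil]
          exact Prod.ext (by ring) (by ring)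
        have hx2 : childPair l a (2*(-2)+1)
            = (-(cfFold l (3*a-2, 3)).1, -(cfFold l (3*a-2, 3)).2) := by
          rw [childPair, show ((a*(2*(-2)+1)+2 : ℤ), (2*(-2)+1:ℤ)) = (-((3*a-2:ℤ)), -(3:ℤ)) from
            Prod.ext (by ring) (by ring)]
          exact cfFold_neg l (3*a-2, 3)
        rw [cfVal, hx, hx2, pairQ_neg]
      · have hm : cfPair ((l ++ [a-1]) ++ [3-2]) = (p, q) := by
          rw [show (l ++ [a-1]) ++ [3-2] = l ++ [a-1,1] from by norm_num, cfPair,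
            cfFold_append, show cfFold [a-1,1] (1,0) = ((a:ℤ), (1:ℤ)) from by
              simp only [cfFold, List.foldr_cons, List.foldr_nil]
              exact Prod.ext (by ring) (by ring), hPa]
        rw [cfVal, hm]
        simp [pairQ]
    · -- t = 2u+1 ≤ -5
      refine ⟨l ++ [a-1, 1, -u-2], 2, ?_, ?_, ?_⟩
      · have := std_extend l a hstd [a-1, 1, -u-2] 2
          (by intro c hc'; simp at hc'; rcases hc' with rfl | rfl | rfl <;> omega) (le_refl 2)
        simpa [List.append_assoc] using this
      · have hx : cfPair ((l ++ [a-1,1,-u-2]) ++ [2])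
            = cfFold l (-(a*(2*u+1)+2), -(2*u+1)) := by
          rw [show (l ++ [a-1,1,-u-2]) ++ [2] = l ++ [a-1,1,-u-2,2] from by simp, cfPair,
            cfFold_append]
          congr 1
          simp only [cfFold, List.foldr_cons, List.foldr_nil]
          exact Prod.ext (by ring) (by ring)
        have hx2 : childPair l a (2*u+1)
            = (-(cfFold l (-(a*(2*u+1)+2), -(2*u+1))).1,
               -(cfFold l (-(a*(2*u+1)+2), -(2*u+1))).2) := by
          rw [childPair, show ((a*(2*u+1)+2 : ℤ), (2*u+1:ℤ))
            = (-(-(a*(2*u+1)+2)), -(-(2*u+1))) from Prod.ext (by ring) (by ring)]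
          exact cfFold_neg l (-(a*(2*u+1)+2), -(2*u+1))
        rw [cfVal, hx, hx2]
        exact pairQ_neg _
      · have hm : cfPair ((l ++ [a-1,1,-u-2]) ++ [2-2]) = (p, q) := by
          rw [show (l ++ [a-1,1,-u-2]) ++ [2-2] = l ++ [a-1,1,-u-2,0] from by norm_num, cfPair,
            cfFold_append, show cfFold [a-1,1,-u-2,0] (1,0) = ((a:ℤ), (1:ℤ)) from by
              simp only [cfFold, List.foldr_cons, List.foldr_nil]
              exact Prod.ext (by ring) (by ring), hPa]
        rw [cfVal, hm]
        simp [pairQ]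
end
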